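/- For every integer P ≥ 1, set L = 2^P. For all sequences y, ρ : ℕ → ℝ and every integer t with 1 ≤ t ≤ L: ∑_{j=1}^{t} y_j · ρ_{t−j} = y_t · ρ_0 + ∑_{i=1}^{t−1} c_i, where c_i = ∑_{j=i−U_i+1}^{i} y_j · ρ_{t−j} if t ≤ i + U_i and c_i = 0 otherwise, with U_i = 2^{ν₂(i)}. -/

import Mathlib

private lemma absA (t i a K : ℕ) (hi : 1 ≤ i) (ha1 : 1 ≤ a)
    (hcomp : a ∣ K ∨ K ∣ a) (hai : a ∣ i) (hKt : K ∣ t - 1) (hKle : K ≤ t - 1)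
    (h1 : t - K ≤ i) (h2' : i ≤ t - 2) : i + a ≤ t - 1 := by
  rcases hcomp with h | h
  · have hd : a ∣ (t - 1) - i := Nat.dvd_sub (h.trans hKt) hai
    have := Nat.le_of_dvd (by omega) hd
    omega
  · have hd : K ∣ (t - 1) - i := Nat.dvd_sub hKt (h.trans hai)
    have := Nat.le_of_dvd (by omega) hd
    omega

private lemma absB (t i a K : ℕ) (hi : 1 ≤ i) (ha : 1 ≤ a) (hK1 : 1 ≤ K)
    (hs : 2 * a ∣ i + a) (hKt : K ∣ t - 1) (hnKt : ¬ 2 * K ∣ t - 1)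
    (hcomp : 2 * a ∣ K ∨ K ∣ a ∨ K = 2 * a)
    (hlt : i + K ≤ t - 1) (hge : t - K ≤ i + a) (hcon : i + a < t) : False := by
  rcases hcomp with h | h | h
  · have hd : 2 * a ∣ (t - 1) - (i + a) := Nat.dvd_sub (h.trans hKt) hs
    rcases Nat.eq_zero_or_pos ((t - 1) - (i + a)) with h0 | hpos
    · have := Nat.le_of_dvd (by omega) h
      omega
    · have h1 := Nat.le_of_dvd hpos hd
      have hd2 : 2 * a ∣ K - ((t - 1) - (i + a)) := Nat.dvd_sub h hd
      have h3 := Nat.le_of_dvd (by omega) hd2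
      omega
  · have hKs : K ∣ i + a := dvd_trans h (dvd_trans (dvd_mul_left a 2) hs)
    have h0 : (t - 1) - (i + a) = 0 :=
      Nat.eq_zero_of_dvd_of_lt (Nat.dvd_sub hKt hKs) (by omega) |>.symm ▸ rfl
    have heq : i + a = t - 1 := by omega
    exact hnKt (by rw [← heq]; exact dvd_trans (mul_dvd_mul_left 2 h) hs)
  · subst h
    have hKs : 2 * a ∣ i + a := hs
    have h0 : (t - 1) - (i + a) = 0 :=
      Nat.eq_zero_of_dvd_of_lt (Nat.dvd_sub hKt hKs) (by omega)
    omega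

private lemma two_mul_dvd_self_add (i : ℕ) (hi : i ≠ 0) :
    2 * 2 ^ padicValNat 2 i ∣ i + 2 ^ padicValNat 2 i := by
  set v := padicValNat 2 i with hv
  obtain ⟨m, hm⟩ := pow_padicValNat_dvd (p := 2) (n := i)
  rw [← hv] at hm
  rcases Nat.even_or_odd m with ⟨n, hn⟩ | ⟨n, hn⟩
  · refine absurd ?_ (pow_succ_padicValNat_not_dvd (p := 2) hi)
    rw [← hv]
    exact ⟨n, by rw [hm, hn, pow_succ]; ring⟩
  · exact ⟨n + 1, by rw [hm, hn]; ring⟩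

private lemma factA (t i : ℕ) (h2 : 2 ≤ t) (hi : 1 ≤ i)
    (h1 : t - 2 ^ padicValNat 2 (t - 1) ≤ i) (h2' : i ≤ t - 2) :
    i + 2 ^ padicValNat 2 i < t := by
  have h := absA t i (2 ^ padicValNat 2 i) (2 ^ padicValNat 2 (t - 1)) hi
    Nat.one_le_two_pow
    ((le_total (padicValNat 2 i) (padicValNat 2 (t - 1))).imp
      (pow_dvd_pow 2) (pow_dvd_pow 2))
    pow_padicValNat_dvd pow_padicValNat_dvd
    (Nat.le_of_dvd (by omega) pow_padicValNat_dvd) h1 h2'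
  omega

private lemma factB (t i : ℕ) (h2 : 2 ≤ t) (hi : 1 ≤ i)
    (hlt : i + 2 ^ padicValNat 2 (t - 1) ≤ t - 1)
    (hge : t - 2 ^ padicValNat 2 (t - 1) ≤ i + 2 ^ padicValNat 2 i) :
    t ≤ i + 2 ^ padicValNat 2 i := by
  by_contra hcon
  push_neg at hcon
  have hnKt : ¬ 2 * 2 ^ padicValNat 2 (t - 1) ∣ t - 1 := by
    have := pow_succ_padicValNat_not_dvd (p := 2) (n := t - 1) (by omega)
    rwa [pow_succ, mul_comm] at this
  have hcomp : 2 * 2 ^ padicValNat 2 i ∣ 2 ^ padicValNat 2 (t - 1) ∨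
      2 ^ padicValNat 2 (t - 1) ∣ 2 ^ padicValNat 2 i ∨
      2 ^ padicValNat 2 (t - 1) = 2 * 2 ^ padicValNat 2 i := by
    rcases le_or_gt (padicValNat 2 (t - 1)) (padicValNat 2 i) with h | h
    · exact Or.inr (Or.inl (pow_dvd_pow 2 h))
    · rcases eq_or_lt_of_le (Nat.succ_le_of_lt h) with h' | h'
      · exact Or.inr (Or.inr (by rw [← h', pow_succ]; ring))
      · exact Or.inl (by rw [show 2 * 2 ^ padicValNat 2 i = 2 ^ (padicValNat 2 i + 1) by
          rw [pow_succ]; ring]; exact pow_dvd_pow 2 h'.le)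
  exact absB t i (2 ^ padicValNat 2 i) (2 ^ padicValNat 2 (t - 1)) hi
    Nat.one_le_two_pow Nat.one_le_two_pow
    (two_mul_dvd_self_add i (by omega)) pow_padicValNat_dvd hnKt hcomp hlt hge hcon

open Finset in
private lemma auxconv (y : ℕ → ℝ) : ∀ t, 1 ≤ t → ∀ ρ : ℕ → ℝ,
    (∑ j ∈ Finset.Icc 1 t, y j * ρ (t - j))
      = y t * ρ 0 +
        ∑ i ∈ Finset.Icc 1 (t - 1),
          (if t ≤ i + 2 ^ (padicValNat 2 i) then
            ∑ j ∈ Finset.Icc (i - 2 ^ (padicValNat 2 i) + 1) i, y j * ρ (t - j)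
          else 0) := by
  intro t
  induction t using Nat.strong_induction_on with
  | _ t IH =>
  intro ht1 ρ
  rcases eq_or_lt_of_le ht1 with h1 | h2
  · simp [← h1]
  · have h2 : 2 ≤ t := h2
    have hU1 : 1 ≤ 2 ^ padicValNat 2 (t - 1) := Nat.one_le_two_pow
    have hUle : 2 ^ padicValNat 2 (t - 1) ≤ t - 1 := Nat.le_of_dvd (by omega) pow_padicValNat_dvd
    set t' := t - 2 ^ padicValNat 2 (t - 1) with ht'
    have ht'1 : 1 ≤ t' := by omega
    have ht'lt : t' < t := by omega
    have eIoc : ∀ b : ℕ, Finset.Icc 1 b = Finset.Ioc 0 b := fun b => by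
      ext x; simp [Finset.mem_Icc, Finset.mem_Ioc]; omega
    set F : ℕ → ℝ := fun j => y j * ρ (t - j) with hF
    set G : ℕ → ℝ := fun i =>
      (if t ≤ i + 2 ^ (padicValNat 2 i) then
        ∑ j ∈ Finset.Icc (i - 2 ^ (padicValNat 2 i) + 1) i, y j * ρ (t - j)
      else 0) with hG
    -- IH applied at t' with shifted ρ
    have IH' := IH t' ht'lt ht'1 (fun n => ρ (n + 2 ^ padicValNat 2 (t - 1)))
    -- rewrite the LHS of IH'
    have e1 : ∑ j ∈ Finset.Icc 1 t', y j * ρ (t' - j + 2 ^ padicValNat 2 (t - 1))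
        = ∑ j ∈ Finset.Icc 1 t', F j := by
      refine Finset.sum_congr rfl fun j hj => ?_
      rw [Finset.mem_Icc] at hj
      have : t' - j + 2 ^ padicValNat 2 (t - 1) = t - j := by omega
      rw [hF]; simp only []; rw [this]
    have e2 : ∑ i ∈ Finset.Icc 1 (t' - 1),
        (if t' ≤ i + 2 ^ (padicValNat 2 i) then
          ∑ j ∈ Finset.Icc (i - 2 ^ (padicValNat 2 i) + 1) i, y j * ρ (t' - j + 2 ^ padicValNat 2 (t - 1))
        else 0)
        = ∑ i ∈ Finset.Icc 1 (t' - 1), G i := by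
      refine Finset.sum_congr rfl fun i hi => ?_
      rw [Finset.mem_Icc] at hi
      have hcond : (t' ≤ i + 2 ^ (padicValNat 2 i)) ↔ (t ≤ i + 2 ^ (padicValNat 2 i)) := by
        constructor
        · intro h
          exact factB t i h2 hi.1 (by omega) (by rw [← ht']; exact h)
        · intro h; omega
      rw [hG]; simp only []
      by_cases hc : t' ≤ i + 2 ^ (padicValNat 2 i)
      · rw [if_pos hc, if_pos (hcond.mp hc)]
        refine Finset.sum_congr rfl fun j hj => ?_
        rw [Finset.mem_Icc] at hj
        have : t' - j + 2 ^ padicValNat 2 (t - 1) = t - j := by omega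
        rw [this]
      · rw [if_neg hc, if_neg (fun h => hc (hcond.mpr h))]
    rw [e1, e2] at IH'
    -- IH' : ∑ j in Icc 1 t', F j = y t' * ρ (0 + 2^k) + ∑ i in Icc 1 (t'-1), G i
    -- extract j = t' from the left sum
    have e3 : ∑ j ∈ Finset.Icc 1 t', F j
        = ∑ j ∈ Finset.Ioc 0 (t' - 1), F j + F t' := by
      rw [eIoc]
      rw [show Finset.Ioc 0 t' = Finset.Ioc 0 (t' - 1) ∪ Finset.Ioc (t' - 1) t' by
        rw [Finset.Ioc_union_Ioc_eq_Ioc] <;> omega]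
      rw [Finset.sum_union (by apply Finset.disjoint_left.mpr; intro x hx hx2; simp only [Finset.mem_Ioc] at hx hx2; omega)]
      congr 1
      rw [show Finset.Ioc (t' - 1) t' = {t'} by ext x; simp [Finset.mem_Ioc]; omega]
      exact Finset.sum_singleton _ _
    have hFt' : F t' = y t' * ρ (0 + 2 ^ padicValNat 2 (t - 1)) := by
      rw [hF]; simp only []
      congr 2
      omega
    have key : ∑ i ∈ Finset.Icc 1 (t' - 1), G i = ∑ j ∈ Finset.Ioc 0 (t' - 1), F j := by
      rw [e3, hFt'] at IH'
      linarith [IH']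
    -- now assemble the main goal
    -- LHS split
    have L1 : ∑ j ∈ Finset.Icc 1 t, F j
        = ∑ j ∈ Finset.Ioc 0 (t' - 1), F j + ∑ j ∈ Finset.Ioc (t' - 1) (t - 1), F j + F t := by
      rw [eIoc]
      rw [show Finset.Ioc 0 t = Finset.Ioc 0 (t - 1) ∪ Finset.Ioc (t - 1) t by
        rw [Finset.Ioc_union_Ioc_eq_Ioc] <;> omega]
      rw [Finset.sum_union (by apply Finset.disjoint_left.mpr; intro x hx hx2; simp only [Finset.mem_Ioc] at hx hx2; omega)]
      rw [show Finset.Ioc 0 (t - 1) = Finset.Ioc 0 (t' - 1) ∪ Finset.Ioc (t' - 1) (t - 1) by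
        rw [Finset.Ioc_union_Ioc_eq_Ioc] <;> omega]
      rw [Finset.sum_union (by apply Finset.disjoint_left.mpr; intro x hx hx2; simp only [Finset.mem_Ioc] at hx hx2; omega)]
      congr 1
      rw [show Finset.Ioc (t - 1) t = {t} by ext x; simp [Finset.mem_Ioc]; omega]
      exact Finset.sum_singleton _ _
    -- RHS split
    have R1 : ∑ i ∈ Finset.Icc 1 (t - 1), G i
        = ∑ i ∈ Finset.Icc 1 (t' - 1), G i + ∑ i ∈ Finset.Ioc (t' - 1) (t - 2), G i + G (t - 1) := by
      rw [eIoc, eIoc]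
      rw [show Finset.Ioc 0 (t - 1)
          = (Finset.Ioc 0 (t' - 1) ∪ Finset.Ioc (t' - 1) (t - 2)) ∪ Finset.Ioc (t - 2) (t - 1) by
        rw [Finset.Ioc_union_Ioc_eq_Ioc (by omega) (by omega),
            Finset.Ioc_union_Ioc_eq_Ioc (by omega) (by omega)]]
      rw [Finset.sum_union (by
        apply Finset.disjoint_left.mpr
        intro x hx hx2
        simp [Finset.mem_Ioc, Finset.mem_union] at hx hx2
        omega)]
      rw [Finset.sum_union (by apply Finset.disjoint_left.mpr; intro x hx hx2; simp only [Finset.mem_Ioc] at hx hx2; omega)]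
      congr 1
      rw [show Finset.Ioc (t - 2) (t - 1) = {t - 1} by ext x; simp [Finset.mem_Ioc]; omega]
      exact Finset.sum_singleton _ _
    -- middle vanishes
    have Rmid : ∑ i ∈ Finset.Ioc (t' - 1) (t - 2), G i = 0 := by
      refine Finset.sum_eq_zero fun i hi => ?_
      rw [Finset.mem_Ioc] at hi
      rw [hG]; simp only []
      rw [if_neg]
      push_neg
      exact factA t i h2 (by omega) (by omega) hi.2
    -- last tile
    have Rlast : G (t - 1) = ∑ j ∈ Finset.Ioc (t' - 1) (t - 1), F j := by
      rw [hG]; simp only []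
      rw [if_pos (by omega)]
      rw [show Finset.Icc (t - 1 - 2 ^ padicValNat 2 (t - 1) + 1) (t - 1) = Finset.Ioc (t' - 1) (t - 1) by
        ext x; simp [Finset.mem_Icc, Finset.mem_Ioc]; omega]
    have hFt : F t = y t * ρ 0 := by rw [hF]; simp
    rw [L1, R1, Rmid, Rlast, key, hFt]
    ring


/-- Correctness of the relaxed interpolation algorithm: the causal convolution value
`z_t = ∑_{j=1}^{t} y_j ρ_{t-j}` equals the red-cell term `y_t ρ_0` plus the accumulated
gray-tile contributions `c_i` to column `t`, where `c_i` is the contribution of the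
input range `[i - U_i + 1, i]` if the tile of iteration `i` covers column `t`
(i.e. `t ≤ i + U_i`, with `U_i = 2 ^ ν₂ i`) and `0` otherwise. -/
theorem relaxed_interpolation_correct (P : ℕ) (hP : 1 ≤ P) (y ρ : ℕ → ℝ) (t : ℕ)
    (ht1 : 1 ≤ t) (ht2 : t ≤ 2 ^ P) :
    (∑ j ∈ Finset.Icc 1 t, y j * ρ (t - j))
      = y t * ρ 0 +
        ∑ i ∈ Finset.Icc 1 (t - 1),
          (if t ≤ i + 2 ^ (padicValNat 2 i) then
            ∑ j ∈ Finset.Icc (i - 2 ^ (padicValNat 2 i) + 1) i, y j * ρ (t - j)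
          else 0) := by
  exact auxconv y t ht1 ρ
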